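/- For any permutation π of {1,...,n}, the function Q_{I_n} + Q_π is bent (resp. near-bent) if and only if Q_{I_n} + Q_{π^{-1}} is bent (resp. near-bent), where I_n is the identity permutation. -/
import Mathlib


open Finset

/-- Walsh–Hadamard transform (integer-valued) of a Boolean function over an
arbitrary finite index type. -/
def walshOn {ι : Type*} [Fintype ι] [DecidableEq ι]
    (f : (ι → ZMod 2) → ZMod 2) (c : ι → ZMod 2) : ℤ :=
  ∑ x : ι → ZMod 2, (-1 : ℤ) ^ ((f x + ∑ k, c k * x k).val)

/-- The quadratic function `Q_π(x) = ∑_{i=1}^{n-1} x_{π(i)} x_{π(i+1)}`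
(0-indexed). -/
def Qperm (n : ℕ) (π : Equiv.Perm (Fin n)) (x : Fin n → ZMod 2) : ZMod 2 :=
  ∑ i : Fin n, if h : (i : ℕ) + 1 < n then x (π i) * x (π ⟨(i : ℕ) + 1, h⟩) else 0

/-- A Boolean function on `𝔽₂ⁿ` is bent if its Walsh spectrum is `{±2^(n/2)}`. -/
def IsBent (n : ℕ) (f : (Fin n → ZMod 2) → ZMod 2) : Prop :=
  ∀ c, walshOn f c = 2 ^ (n / 2) ∨ walshOn f c = -2 ^ (n / 2)

/-- A Boolean function on `𝔽₂ⁿ` is near-bent if its Walsh spectrum is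
`{0, ±2^((n+1)/2)}`. -/
def IsNearBent (n : ℕ) (f : (Fin n → ZMod 2) → ZMod 2) : Prop :=
  ∀ c, walshOn f c = 0 ∨ walshOn f c = 2 ^ ((n + 1) / 2) ∨
    walshOn f c = -(2 ^ ((n + 1) / 2))

/-- The reverse of a permutation: `π̃(i) = π(n+1-i)` (1-indexed). -/
def reversePerm (n : ℕ) (π : Equiv.Perm (Fin n)) : Equiv.Perm (Fin n) :=
  Fin.revPerm.trans π


lemma walsh_key (n : ℕ) (π : Equiv.Perm (Fin n)) (c : Fin n → ZMod 2) :
    walshOn (fun x => Qperm n 1 x + Qperm n π x) c =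
    walshOn (fun x => Qperm n 1 x + Qperm n π⁻¹ x) (fun k => c (π k)) := by
  unfold walshOn
  refine Fintype.sum_equiv (Equiv.arrowCongr π⁻¹ (Equiv.refl (ZMod 2))) _ _ ?_
  intro x
  congr 1
  have e1 : Qperm n π x = Qperm n 1 (fun k => x (π k)) := by
    unfold Qperm
    refine Finset.sum_congr rfl fun i _ => ?_
    simp
  have e2 : Qperm n π⁻¹ (fun k => x (π k)) = Qperm n 1 x := by
    unfold Qperm
    refine Finset.sum_congr rfl fun i _ => ?_
    simp
  have e3 : (∑ k, c k * x k) = ∑ k, c (π k) * x (π k) :=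
    (Equiv.sum_comp π (fun k => c k * x k)).symm
  have : ((Equiv.arrowCongr π⁻¹ (Equiv.refl (ZMod 2))) x) = fun k => x (π k) := rfl
  rw [this]
  simp only [e1, e2, e3]
  ring

lemma walsh_key' (n : ℕ) (π : Equiv.Perm (Fin n)) (c : Fin n → ZMod 2) :
    walshOn (fun x => Qperm n 1 x + Qperm n π⁻¹ x) c =
    walshOn (fun x => Qperm n 1 x + Qperm n π x) (fun k => c (π⁻¹ k)) := by
  have := walsh_key n π⁻¹ c
  rwa [inv_inv] at this

theorem bent_iff_inverse (n : ℕ) (π : Equiv.Perm (Fin n)) :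
    (IsBent n (fun x => Qperm n 1 x + Qperm n π x) ↔
      IsBent n (fun x => Qperm n 1 x + Qperm n π⁻¹ x)) ∧
    (IsNearBent n (fun x => Qperm n 1 x + Qperm n π x) ↔
      IsNearBent n (fun x => Qperm n 1 x + Qperm n π⁻¹ x)) := by
  constructor
  · constructor
    · intro h c
      rw [walsh_key' n π c]
      exact h _
    · intro h c
      rw [walsh_key n π c]
      exact h _
  · constructor
    · intro h c
      rw [walsh_key' n π c]
      exact h _
    · intro h c
      rw [walsh_key n π c]
      exact h _
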